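/- Let d be a diagram model, let f be a formula of the deep-embedded diagrammatic language, and let pf be a valid proof (a list of valid tactics). If f is well-formed in the empty context and the proof checker check_proof f pf returns true, then the evaluation of f in d with the empty context holds: formula_eval d [] f. -/

import Mathlib

/-- A finite quiver: a number of vertices (the vertex set being `{0, …, n-1}`)
together with a finite list of arcs, each arc a pair (source, target). -/
structure Quiv where
  nbVertex : ℕ
  arcs : List (ℕ × ℕ)

/-- The dual quiver: same vertices, every arc reversed. -/
def Quiv.dual (Q : Quiv) : Quiv :=
  ⟨Q.nbVertex, Q.arcs.map fun a => (a.2, a.1)⟩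

/-- A path from `u` to `v` in `Q`: a list of indices into `Q.arcs` selecting a chain
of consecutive arcs starting at `u` and ending at `v`. -/
inductive Quiv.IsPath (Q : Quiv) : ℕ → List ℕ → ℕ → Prop
  | nil (u : ℕ) : Quiv.IsPath Q u [] u
  | cons {u v w i : ℕ} {p : List ℕ} :
      Q.arcs[i]? = some (u, v) → Quiv.IsPath Q v p w → Quiv.IsPath Q u (i :: p) w

/-- A subquiver: a list of selected vertex labels and a list of selected arc
indices, determining a restriction operation on quivers. -/
structure Subquiv where
  vertices : List ℕ
  arcs : List ℕ

/-- Terms of the deep-embedded language: variables (de Bruijn indices) and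
restrictions along subquivers. -/
inductive Term where
  | var : ℕ → Term
  | restr : Subquiv → Term → Term

/-- Formulas of the deep-embedded first-order language for diagrams. -/
inductive Formula where
  | all : Quiv → Formula → Formula
  | ex : Quiv → Formula → Formula
  | imp : Formula → Formula → Formula
  | and : Formula → Formula → Formula
  | tru : Formula
  | commute : Term → Formula
  | eqD : Term → Term → Formula

/-- The dual formula: every quiver annotation is replaced by its dual quiver. -/
def Formula.dual : Formula → Formula
  | .all Q f => .all Q.dual f.dual
  | .ex Q f => .ex Q.dual f.dual
  | .imp f1 f2 => .imp f1.dual f2.dual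
  | .and f1 f2 => .and f1.dual f2.dual
  | .tru => .tru
  | .commute t => .commute t
  | .eqD t1 t2 => .eqD t1 t2

/-- A path relation: a family of equivalence relations on finite sequences of arc
indices, indexed by pairs of vertices, compatible with concatenation. -/
structure PathRel where
  rel : ℕ → ℕ → List ℕ → List ℕ → Prop
  equiv : ∀ u v, Equivalence (rel u v)
  comp : ∀ u v w p p' q q', rel u v p p' → rel v w q q' →
    rel u w (p ++ q) (p' ++ q')

/-- The dual path relation, on reversed paths. -/
def PathRel.dual (r : PathRel) : PathRel where
  rel u v p q := r.rel v u p.reverse q.reverse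
  equiv u v :=
    ⟨fun _ => (r.equiv v u).refl _, fun h => (r.equiv v u).symm h,
     fun h1 h2 => (r.equiv v u).trans h1 h2⟩
  comp u v w p p' q q' h1 h2 := by
    simpa [List.reverse_append] using r.comp w v u _ _ _ _ h2 h1

/-- A diagram model on a carrier type `d`: an underlying quiver map, a restriction
operation, a setoid (equivalence) relation, and a path relation for each diagram. -/
structure Model (d : Type*) where
  toQuiver : d → Quiv
  restr : Subquiv → d → d
  eqD : d → d → Prop
  eqD_equiv : Equivalence eqD
  eqComp : d → PathRel

/-- The dual model: same carrier, restriction and setoid relation, but the quiver map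
is composed with quiver dualization and each path relation is replaced by the path
relation on reversed paths. -/
def Model.dual {d : Type*} (M : Model d) : Model d where
  toQuiver D := (M.toQuiver D).dual
  restr := M.restr
  eqD := M.eqD
  eqD_equiv := M.eqD_equiv
  eqComp D := (M.eqComp D).dual

/-- A diagram commutes when its path relation is full on its underlying quiver:
any two paths with the same source and the same target are related. -/
def Model.Commutes {d : Type*} (M : Model d) (D : d) : Prop :=
  ∀ u v p q, (M.toQuiver D).IsPath u p v → (M.toQuiver D).IsPath u q v →
    (M.eqComp D).rel u v p q

/-- Evaluation of a term in a context (a list of diagrams): `var k` looks up the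
`k`-th entry (`none` if the context is too short), `restr m t` applies the
restriction operation. -/
def termEval {d : Type*} (M : Model d) (ctx : List d) : Term → Option d
  | .var k => ctx[k]?
  | .restr m t => (termEval M ctx t).map (M.restr m)

/-- Evaluation of a formula in a model, relative to a context of diagrams. -/
def formulaEval {d : Type*} (M : Model d) : List d → Formula → Prop
  | ctx, .all Q f => ∀ D : d, M.toQuiver D = Q → formulaEval M (D :: ctx) f
  | ctx, .ex Q f => ∃ D : d, M.toQuiver D = Q ∧ formulaEval M (D :: ctx) f
  | ctx, .imp f1 f2 => formulaEval M ctx f1 → formulaEval M ctx f2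
  | ctx, .and f1 f2 => formulaEval M ctx f1 ∧ formulaEval M ctx f2
  | _, .tru => True
  | ctx, .commute t =>
      match termEval M ctx t with
      | some D => M.Commutes D
      | none => False
  | ctx, .eqD t1 t2 =>
      match termEval M ctx t1, termEval M ctx t2 with
      | some D1, some D2 => M.eqD D1 D2
      | _, _ => False

/-- The restriction of a quiver along a subquiver: the selected vertices, relabeled
in order, and the selected arcs, with endpoints relabeled accordingly. -/
def Subquiv.restrQuiver (m : Subquiv) (Q : Quiv) : Quiv :=
  ⟨m.vertices.length,
   (m.arcs.filterMap fun i => Q.arcs[i]?).map fun a =>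
     (m.vertices.idxOf a.1, m.vertices.idxOf a.2)⟩

/-- Well-formedness of the restriction of a quiver along a subquiver: arc indices in
bound, selected vertices duplicate-free and in bound, and every selected arc has its
endpoints among the selected vertices. -/
def Subquiv.RestrWf (m : Subquiv) (Q : Quiv) : Prop :=
  (∀ i ∈ m.arcs, i < Q.arcs.length) ∧ m.vertices.Nodup ∧
  (∀ x ∈ m.vertices, x < Q.nbVertex) ∧
  (∀ i ∈ m.arcs, ∀ a, Q.arcs[i]? = some a → a.1 ∈ m.vertices ∧ a.2 ∈ m.vertices)

/-- The sort of a term in a context of quivers giving the sorts of the variables. -/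
def termSort (l : List Quiv) : Term → Option Quiv
  | .var k => l[k]?
  | .restr m t => (termSort l t).map m.restrQuiver

/-- A term is well-formed in a context `l` of quivers if the context is long enough
and every restriction in the term is well-formed for the sort it applies to. -/
def termWf (l : List Quiv) : Term → Prop
  | .var k => k < l.length
  | .restr m t => termWf l t ∧ ∀ Q, termSort l t = some Q → m.RestrWf Q

/-- A formula is well-formed in a context `l` of quivers if `l` provides a sort to
each free variable and all the terms appearing in it have a well-formed sort. -/
def formulaWf (l : List Quiv) : Formula → Prop
  | .all Q f => formulaWf (Q :: l) f
  | .ex Q f => formulaWf (Q :: l) f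
  | .imp f1 f2 => formulaWf l f1 ∧ formulaWf l f2
  | .and f1 f2 => formulaWf l f1 ∧ formulaWf l f2
  | .tru => True
  | .commute t => termWf l t
  | .eqD t1 t2 => termWf l t1 ∧ termWf l t2

/-- A sequent: a context of quivers, a list of premises and a goal. -/
structure Sequent where
  context : List Quiv
  premises : List Formula
  goal : Formula

/-- Conjunction of a list of premises, ending with `tru`. -/
def premisesFormula : List Formula → Formula
  | [] => .tru
  | h :: t => .and h (premisesFormula t)

/-- The formula associated with a sequent: the universal closure over its context of
the implication from the conjunction of its premises to its goal. -/
def Sequent.toFormula (s : Sequent) : Formula :=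
  s.context.foldr Formula.all (.imp (premisesFormula s.premises) s.goal)

/-- A sequent is well-formed when its associated formula is well-formed in the empty
context. -/
def Sequent.Wf (s : Sequent) : Prop := formulaWf [] s.toFormula

/-- Evaluation of a sequent in a model: the evaluation of its associated formula. -/
def sequentEval {d : Type} (M : Model d) (s : Sequent) : Prop :=
  formulaEval M [] s.toFormula

/-- A tactic: a function making progress in a proof, from sequents to optional
sequents. -/
def Tac : Type := Sequent → Option Sequent

/-- A tactic is valid when, on any well-formed sequent on which it succeeds, it
produces a well-formed sequent whose evaluation implies (in every diagram model) the
evaluation of the initial sequent. -/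
def Tac.Valid (τ : Tac) : Prop :=
  ∀ s s', s.Wf → τ s = some s' →
    s'.Wf ∧ ∀ (d : Type) (M : Model d), sequentEval M s' → sequentEval M s

/-- The proof checker: starting from the sequent with empty context, no premises and
goal `f`, apply the tactics in order; fail if some tactic fails, and otherwise
succeed exactly when the final goal is `tru`. -/
def checkProofAux : Sequent → List Tac → Bool
  | s, [] => match s.goal with | .tru => true | _ => false
  | s, τ :: pf =>
      match τ s with
      | some s' => checkProofAux s' pf
      | none => false

def checkProof (f : Formula) (pf : List Tac) : Bool :=
  checkProofAux ⟨[], [], f⟩ pf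

/-- Correctness of the proof checker: if `f` is well-formed in the empty context and
the checker accepts a valid proof `pf` (a list of valid tactics) of `f`, then `f`
evaluates to a true statement in any diagram model, with the empty context. -/
lemma eval_foldr_tru {d : Type} (M : Model d) (p : Formula) :
    ∀ (l : List Quiv) (ctx : List d),
      formulaEval M ctx (l.foldr Formula.all (.imp p .tru))
  | [], ctx => fun _ => trivial
  | Q :: l, ctx => fun D _ => eval_foldr_tru M p l (D :: ctx)

lemma checkProofAux_valid {d : Type} (M : Model d) :
    ∀ (pf : List Tac) (s : Sequent), (∀ τ ∈ pf, τ.Valid) → s.Wf →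
      checkProofAux s pf = true → sequentEval M s := by
  intro pf
  induction pf with
  | nil =>
    intro s _ _ hc
    cases hg : s.goal <;> simp [checkProofAux, hg] at hc
    unfold sequentEval Sequent.toFormula
    rw [hg]
    exact eval_foldr_tru M _ _ _
  | cons τ pf ih =>
    intro s hv hwf hc
    unfold checkProofAux at hc
    cases hτ : τ s with
    | none => rw [hτ] at hc; exact absurd hc (by simp)
    | some s' =>
      rw [hτ] at hc
      obtain ⟨hwf', himp⟩ := hv τ (by simp) s s' hwf hτ
      exact himp d M (ih s' (fun τ' h => hv τ' (by simp [h])) hwf' hc)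

theorem check_proof_valid {d : Type} (M : Model d) (f : Formula) (pf : List Tac)
    (hvalid : ∀ τ ∈ pf, τ.Valid)
    (hwf : formulaWf [] f) (hcheck : checkProof f pf = true) :
    formulaEval M [] f := by
  have hswf : Sequent.Wf ⟨[], [], f⟩ := by
    show formulaWf [] _
    simp only [Sequent.toFormula, premisesFormula, List.foldr]
    exact ⟨trivial, hwf⟩
  have := checkProofAux_valid M pf ⟨[], [], f⟩ hvalid hswf hcheck
  exact this trivial
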